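/- arXiv:2003.00120 — 9 statements merged into one kernel-verified Lean document; each statement's English description precedes it below -/
import Mathlib

section
/- Let R > 0 and x > 0 be real numbers, and for real β define Y⁺(β,x) = (e^x − 1)·e^{β} / (R + (e^x + 1)·e^{β} + e^{x+2β}/R) and Y⁻(β,x) = (e^x − 1)·e^{β} / (e^x·R + (e^x + 1)·e^{β} + e^{2β}/R). Then Y⁺(β,x) > Y⁻(β,x) if and only if R > e^{β}. -/
theorem stmt_2 (R x : ℝ) (hR : 0 < R) (hx : 0 < x) (β : ℝ) :
    (Real.exp x - 1) * Real.exp β /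
        (R + (Real.exp x + 1) * Real.exp β + Real.exp (x + 2 * β) / R)
      > (Real.exp x - 1) * Real.exp β /
        (Real.exp x * R + (Real.exp x + 1) * Real.exp β + Real.exp (2 * β) / R)
    ↔ R > Real.exp β := by
  have hex : 1 < Real.exp x := by nlinarith [Real.add_one_le_exp x]
  have heb : 0 < Real.exp β := Real.exp_pos β
  have ha : 0 < (Real.exp x - 1) * Real.exp β := mul_pos (by linarith) heb
  have hsplit : Real.exp (x + 2 * β) = Real.exp x * Real.exp β * Real.exp β := by
    rw [show x + 2*β = (x+β)+β by ring, Real.exp_add, Real.exp_add]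
  have h2 : Real.exp (2 * β) = Real.exp β * Real.exp β := by
    rw [← Real.exp_add]; ring_nf
  have hD1 : 0 < R + (Real.exp x + 1) * Real.exp β + Real.exp (x + 2 * β) / R := by
    positivity
  have hD2 : 0 < Real.exp x * R + (Real.exp x + 1) * Real.exp β + Real.exp (2 * β) / R := by
    positivity
  rw [gt_iff_lt, div_lt_div_iff_of_pos_left ha hD2 hD1]
  rw [hsplit, h2]
  rw [← mul_lt_mul_iff_of_pos_right hR]
  field_simp
  constructor
  · intro h
    nlinarith [mul_pos (sub_pos.mpr hex) (by positivity : (0:ℝ) < Real.exp β + R)]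
  · intro h
    nlinarith [mul_pos (sub_pos.mpr hex) (by positivity : (0:ℝ) < Real.exp β + R)]
end

section
/- Let R > 0 and x > 0 be real numbers. For every real β, Y⁺(β,x) = (e^x − 1)·e^{β} / (R + (e^x + 1)·e^{β} + e^{x+2β}/R) satisfies Y⁺(β,x) ≤ (e^{x/2} − 1)/(e^{x/2} + 1), with equality if and only if R = e^{β + x/2}. -/
theorem stmt_3 (R x : ℝ) (hR : 0 < R) (hx : 0 < x) (β : ℝ) :
    (Real.exp x - 1) * Real.exp β /
        (R + (Real.exp x + 1) * Real.exp β + Real.exp (x + 2 * β) / R)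
      ≤ (Real.exp (x / 2) - 1) / (Real.exp (x / 2) + 1)
    ∧ ((Real.exp x - 1) * Real.exp β /
        (R + (Real.exp x + 1) * Real.exp β + Real.exp (x + 2 * β) / R)
      = (Real.exp (x / 2) - 1) / (Real.exp (x / 2) + 1)
        ↔ R = Real.exp (β + x / 2)) := by
  set a := Real.exp (x / 2) with ha
  set b := Real.exp β with hb
  have hb0 : 0 < b := Real.exp_pos β
  have ha1 : 1 < a := by
    have := Real.add_one_le_exp (x / 2)
    rw [ha]; linarith
  have hex : Real.exp x = a ^ 2 := by
    rw [show x = x / 2 + x / 2 by ring, Real.exp_add, ha]; ring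
  have hex2 : Real.exp (x + 2 * β) = a ^ 2 * b ^ 2 := by
    rw [show x + 2 * β = x / 2 + x / 2 + (β + β) by ring, Real.exp_add, Real.exp_add,
      Real.exp_add, ha, hb]; ring
  have hexab : Real.exp (β + x / 2) = b * a := by
    rw [Real.exp_add, ha, hb]
  rw [hex, hex2, hexab]
  have hD : 0 < R + (a ^ 2 + 1) * b + a ^ 2 * b ^ 2 / R := by positivity
  have ha0 : 0 < a + 1 := by linarith
  have hDiv : a ^ 2 * b ^ 2 / R * R = a ^ 2 * b ^ 2 := div_mul_cancel₀ _ hR.ne'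
  constructor
  · rw [div_le_div_iff₀ hD ha0, ← mul_le_mul_iff_of_pos_right hR]
    nlinarith [sq_nonneg (R - a * b), mul_pos hb0 hR,
      mul_pos (mul_pos hb0 hR) (sub_pos.mpr ha1)]
  · rw [div_eq_div_iff hD.ne' ha0.ne']
    constructor
    · intro h
      have h2 : (R - a * b) ^ 2 = 0 := by
        have hc : (a ^ 2 - 1) * b * (a + 1) * R = (a - 1) *
            (R + (a ^ 2 + 1) * b + a ^ 2 * b ^ 2 / R) * R := by rw [h]
        nlinarith [sub_pos.mpr ha1, hb0, hDiv]
      have h3 : R - a * b = 0 := by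
        have := sq_eq_zero_iff.mp h2
        exact this
      linear_combination h3
    · intro h
      subst h
      field_simp
      ring
end

section
/- Let R > 0 and x > 0 be real numbers. For every real β, Y⁻(β,x) = (e^x − 1)·e^{β} / (e^x·R + (e^x + 1)·e^{β} + e^{2β}/R) satisfies Y⁻(β,x) ≤ (e^{x/2} − 1)/(e^{x/2} + 1), with equality if and only if R = e^{β − x/2}. -/
theorem stmt_4 (R x : ℝ) (hR : 0 < R) (hx : 0 < x) (β : ℝ) :
    (Real.exp x - 1) * Real.exp β /
        (Real.exp x * R + (Real.exp x + 1) * Real.exp β + Real.exp (2 * β) / R)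
      ≤ (Real.exp (x / 2) - 1) / (Real.exp (x / 2) + 1)
    ∧ ((Real.exp x - 1) * Real.exp β /
        (Real.exp x * R + (Real.exp x + 1) * Real.exp β + Real.exp (2 * β) / R)
      = (Real.exp (x / 2) - 1) / (Real.exp (x / 2) + 1)
        ↔ R = Real.exp (β - x / 2)) := by
  set a := Real.exp (x / 2) with ha
  set E := Real.exp β with hE
  have hEpos : 0 < E := Real.exp_pos β
  have ha1 : 1 < a := by
    rw [ha]
    have := Real.add_one_le_exp (x / 2)
    linarith
  have hapos : 0 < a := by linarith
  have hax : Real.exp x = a ^ 2 := by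
    rw [ha, sq, ← Real.exp_add]; ring_nf
  have h2β : Real.exp (2 * β) = E ^ 2 := by
    rw [hE, sq, ← Real.exp_add]; ring_nf
  have hsub : Real.exp (β - x / 2) = E / a := by
    rw [hE, ha, Real.exp_sub]
  rw [hax, h2β, hsub]
  have key : a ^ 2 * R + E ^ 2 / R - 2 * a * E = (a * R - E) ^ 2 / R := by
    field_simp; ring
  have hsq : 0 ≤ (a * R - E) ^ 2 / R := by positivity
  have hDge : (a + 1) ^ 2 * E ≤ a ^ 2 * R + (a ^ 2 + 1) * E + E ^ 2 / R := by
    nlinarith [hsq, key]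
  have hD : 0 < a ^ 2 * R + (a ^ 2 + 1) * E + E ^ 2 / R := by positivity
  have hBpos : 0 < (a + 1) ^ 2 * E := by positivity
  constructor
  · calc (a ^ 2 - 1) * E / (a ^ 2 * R + (a ^ 2 + 1) * E + E ^ 2 / R)
        ≤ (a ^ 2 - 1) * E / ((a + 1) ^ 2 * E) := by
          apply div_le_div_of_nonneg_left _ hBpos hDge
          nlinarith
      _ = (a - 1) / (a + 1) := by
          field_simp; ring
  · constructor
    · intro h
      rw [div_eq_div_iff hD.ne' (by positivity)] at h
      have hz : (a * R - E) ^ 2 = 0 := by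
        have h1 : (a - 1) * ((a * R - E) ^ 2 / R) = 0 := by nlinarith [key]
        have h2 : (a * R - E) ^ 2 / R = 0 := by
          rcases mul_eq_zero.mp h1 with h' | h'
          · linarith
          · exact h'
        exact (div_eq_zero_iff.mp h2).resolve_right hR.ne'
      have hRE : a * R - E = 0 := pow_eq_zero_iff (n := 2) (by norm_num) |>.mp hz
      rw [eq_div_iff hapos.ne']
      linarith
    · intro h
      have hRE : a * R = E := by
        rw [h, mul_div_cancel₀ _ hapos.ne']
      have hDeq : a ^ 2 * R + (a ^ 2 + 1) * E + E ^ 2 / R = (a + 1) ^ 2 * E := by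
        have h0 : (a * R - E) ^ 2 / R = 0 := by rw [hRE]; simp
        linarith [key, h0]
      rw [hDeq]
      field_simp; ring
end

section
/- Let R > 0 and x > 0 be real numbers, and define Y(β) = (e^x − 1) / (R·e^{−β} + e^x + 1 + e^{x+β}/R) if e^{β} < R, and Y(β) = (e^x − 1) / (R·e^{x−β} + e^x + 1 + e^{β}/R) if e^{β} ≥ R. Then Y is monotonically increasing on (−∞, log R − x/2], monotonically decreasing on [log R − x/2, log R], monotonically increasing on [log R, log R + x/2], and monotonically decreasing on [log R + x/2, ∞). -/
private lemma denom_diff (R p q a b : ℝ) (hR : 0 < R) :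
    R * Real.exp (p - a) + Real.exp (q + a) / R
      - (R * Real.exp (p - b) + Real.exp (q + b) / R)
    = (Real.exp b - Real.exp a) * (R ^ 2 * Real.exp p - Real.exp q * (Real.exp a * Real.exp b))
        / (R * Real.exp a * Real.exp b) := by
  rw [Real.exp_sub, Real.exp_sub, Real.exp_add, Real.exp_add]
  have ha := (Real.exp_pos a).ne'
  have hb := (Real.exp_pos b).ne'
  field_simp
  ring

private lemma denom_mono (R p q a b : ℝ) (hR : 0 < R) (hab : a ≤ b)
    (h : a + b ≤ 2 * Real.log R + p - q) :
    R * Real.exp (p - b) + Real.exp (q + b) / R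
      ≤ R * Real.exp (p - a) + Real.exp (q + a) / R := by
  have key : Real.exp q * (Real.exp a * Real.exp b) ≤ R ^ 2 * Real.exp p := by
    have : Real.exp (q + (a + b)) ≤ Real.exp (2 * Real.log R + p) :=
      Real.exp_le_exp.2 (by linarith)
    calc Real.exp q * (Real.exp a * Real.exp b) = Real.exp (q + (a + b)) := by
          rw [Real.exp_add, Real.exp_add]
      _ ≤ Real.exp (2 * Real.log R + p) := this
      _ = R ^ 2 * Real.exp p := by
          rw [Real.exp_add, show 2*Real.log R = Real.log R + Real.log R from by ring, Real.exp_add, Real.exp_log hR]; ring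
  have hd := denom_diff R p q a b hR
  have hnum : 0 ≤ (Real.exp b - Real.exp a) *
      (R ^ 2 * Real.exp p - Real.exp q * (Real.exp a * Real.exp b)) := by
    apply mul_nonneg
    · linarith [Real.exp_le_exp.2 hab]
    · linarith
  have hden : 0 < R * Real.exp a * Real.exp b := by positivity
  nlinarith [div_nonneg hnum hden.le]

private lemma denom_anti (R p q a b : ℝ) (hR : 0 < R) (hab : a ≤ b)
    (h : 2 * Real.log R + p - q ≤ a + b) :
    R * Real.exp (p - a) + Real.exp (q + a) / R
      ≤ R * Real.exp (p - b) + Real.exp (q + b) / R := by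
  have key : R ^ 2 * Real.exp p ≤ Real.exp q * (Real.exp a * Real.exp b) := by
    have : Real.exp (2 * Real.log R + p) ≤ Real.exp (q + (a + b)) :=
      Real.exp_le_exp.2 (by linarith)
    calc R ^ 2 * Real.exp p = Real.exp (2 * Real.log R + p) := by
          rw [Real.exp_add, show 2*Real.log R = Real.log R + Real.log R from by ring, Real.exp_add, Real.exp_log hR]; ring
      _ ≤ Real.exp (q + (a + b)) := this
      _ = Real.exp q * (Real.exp a * Real.exp b) := by rw [Real.exp_add, Real.exp_add]
  have hd := denom_diff R p q a b hR
  have hnum : (Real.exp b - Real.exp a) *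
      (R ^ 2 * Real.exp p - Real.exp q * (Real.exp a * Real.exp b)) ≤ 0 := by
    apply mul_nonpos_of_nonneg_of_nonpos
    · linarith [Real.exp_le_exp.2 hab]
    · linarith
  have hden : 0 < R * Real.exp a * Real.exp b := by positivity
  nlinarith [div_nonpos_of_nonpos_of_nonneg hnum hden.le]

theorem stmt_5 (R x : ℝ) (hR : 0 < R) (hx : 0 < x)
    (Y : ℝ → ℝ)
    (hY : Y = fun β =>
      if Real.exp β < R then
        (Real.exp x - 1) / (R * Real.exp (-β) + Real.exp x + 1 + Real.exp (x + β) / R)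
      else
        (Real.exp x - 1) / (R * Real.exp (x - β) + Real.exp x + 1 + Real.exp β / R)) :
    MonotoneOn Y (Set.Iic (Real.log R - x / 2)) ∧
      AntitoneOn Y (Set.Icc (Real.log R - x / 2) (Real.log R)) ∧
      MonotoneOn Y (Set.Icc (Real.log R) (Real.log R + x / 2)) ∧
      AntitoneOn Y (Set.Ici (Real.log R + x / 2)) := by
  have hnum : (0:ℝ) < Real.exp x - 1 := by
    have := Real.add_one_le_exp x
    linarith
  -- Y on β ≤ log R equals branch-1 formula
  have hY1 : ∀ β, β ≤ Real.log R →
      Y β = (Real.exp x - 1) / (R * Real.exp (0 - β) + Real.exp x + 1 + Real.exp (x + β) / R) := by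
    intro β hβ
    rw [hY]
    simp only [zero_sub]
    by_cases h : Real.exp β < R
    · rw [if_pos h]
    · rw [if_neg h]
      push_neg at h
      have hle : Real.exp β ≤ R := by
        calc Real.exp β ≤ Real.exp (Real.log R) := Real.exp_le_exp.2 hβ
          _ = R := Real.exp_log hR
      have heq : Real.exp β = R := le_antisymm hle h
      have hβeq : β = Real.log R := by
        rw [← Real.log_exp β, heq]
      congr 1
      rw [Real.exp_sub, Real.exp_add, heq, Real.exp_neg, heq]
      field_simp
      ring
  have hY2 : ∀ β, Real.log R ≤ β →
      Y β = (Real.exp x - 1) / (R * Real.exp (x - β) + Real.exp x + 1 + Real.exp β / R) := by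
    intro β hβ
    rw [hY]
    have : R ≤ Real.exp β := by
      calc R = Real.exp (Real.log R) := (Real.exp_log hR).symm
        _ ≤ Real.exp β := Real.exp_le_exp.2 hβ
    simp only [if_neg (not_lt.2 this)]
  have hden1 : ∀ β, 0 < R * Real.exp (0 - β) + Real.exp x + 1 + Real.exp (x + β) / R := by
    intro β; positivity
  have hden2 : ∀ β, 0 < R * Real.exp (x - β) + Real.exp β / R + (Real.exp x + 1) := by
    intro β; positivity
  refine ⟨?_, ?_, ?_, ?_⟩
  · intro a ha b hb hab
    simp only [Set.mem_Iic] at ha hb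
    have ha' : a ≤ Real.log R := by linarith
    have hb' : b ≤ Real.log R := by linarith
    rw [hY1 a ha', hY1 b hb']
    have hd : R * Real.exp (0 - b) + Real.exp (x + b) / R
        ≤ R * Real.exp (0 - a) + Real.exp (x + a) / R :=
      denom_mono R 0 x a b hR hab (by linarith)
    have h1 := hden1 a
    have h2 := hden1 b
    apply div_le_div_of_nonneg_left hnum.le h2 -- check direction
    linarith
  · intro a ha b hb hab
    simp only [Set.mem_Icc] at ha hb
    rw [hY1 a ha.2, hY1 b hb.2]
    have hd : R * Real.exp (0 - a) + Real.exp (x + a) / R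
        ≤ R * Real.exp (0 - b) + Real.exp (x + b) / R :=
      denom_anti R 0 x a b hR hab (by linarith [ha.1, hb.1])
    have h1 := hden1 a
    have h2 := hden1 b
    apply div_le_div_of_nonneg_left hnum.le h1
    linarith
  · intro a ha b hb hab
    simp only [Set.mem_Icc] at ha hb
    rw [hY2 a ha.1, hY2 b hb.1]
    have hd : R * Real.exp (x - b) + Real.exp (0 + b) / R
        ≤ R * Real.exp (x - a) + Real.exp (0 + a) / R :=
      denom_mono R x 0 a b hR hab (by linarith [ha.2, hb.2])
    simp only [zero_add] at hd
    have h1 := hden2 a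
    have h2 := hden2 b
    apply div_le_div_of_nonneg_left hnum.le ?_
    · linarith
    · linarith
  · intro a ha b hb hab
    simp only [Set.mem_Ici] at ha hb
    have ha' : Real.log R ≤ a := by linarith
    have hb' : Real.log R ≤ b := by linarith
    rw [hY2 a ha', hY2 b hb']
    have hd : R * Real.exp (x - a) + Real.exp (0 + a) / R
        ≤ R * Real.exp (x - b) + Real.exp (0 + b) / R :=
      denom_anti R x 0 a b hR hab (by linarith)
    simp only [zero_add] at hd
    apply div_le_div_of_nonneg_left hnum.le ?_
    · linarith [hden2 a, hden2 b]
    · linarith [hden2 a, hden2 b]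
end

section
/- Let R > 0 and x, β₀ be real numbers, and let D = R·e^{−β₀} + e^x + 1 + e^{x+β₀}/R and Y = (e^x − 1)/D. Then (e^{x/2} − 1)/(e^{x/2} + 1) − Y = (Y/(e^{x/2} + 1)²)·(√(R·e^{−β₀}) − √(e^{x+β₀}/R))². -/
theorem stmt_6 (R x β₀ : ℝ) (hR : 0 < R)
    (D Y : ℝ)
    (hD : D = R * Real.exp (-β₀) + Real.exp x + 1 + Real.exp (x + β₀) / R)
    (hY : Y = (Real.exp x - 1) / D) :
    (Real.exp (x / 2) - 1) / (Real.exp (x / 2) + 1) - Y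
      = Y / (Real.exp (x / 2) + 1) ^ 2 *
        (Real.sqrt (R * Real.exp (-β₀)) - Real.sqrt (Real.exp (x + β₀) / R)) ^ 2 := by
  have ha : (0:ℝ) < R * Real.exp (-β₀) := by positivity
  have hb : (0:ℝ) < Real.exp (x + β₀) / R := by positivity
  have hx2 : Real.exp x = Real.exp (x / 2) ^ 2 := by
    rw [sq, ← Real.exp_add]; ring_nf
  have h3 : Real.sqrt (R * Real.exp (-β₀)) * Real.sqrt (Real.exp (x + β₀) / R)
      = Real.exp (x / 2) := by
    rw [← Real.sqrt_mul ha.le]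
    have h4 : R * Real.exp (-β₀) * (Real.exp (x + β₀) / R) = Real.exp (x / 2) ^ 2 := by
      rw [← hx2]; field_simp; rw [← Real.exp_add]; ring_nf
    rw [h4, Real.sqrt_sq (Real.exp_pos _).le]
  have hsq : (Real.sqrt (R * Real.exp (-β₀)) - Real.sqrt (Real.exp (x + β₀) / R)) ^ 2
      = R * Real.exp (-β₀) + Real.exp (x + β₀) / R - 2 * Real.exp (x / 2) := by
    have h1 := Real.sq_sqrt ha.le
    have h2 := Real.sq_sqrt hb.le
    ring_nf
    ring_nf at h1 h2 h3
    nlinarith [h1, h2, h3]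
  have hD0 : 0 < D := by rw [hD]; positivity
  have hs : (0:ℝ) < Real.exp (x / 2) + 1 := by positivity
  subst hY hD
  rw [hsq, hx2]
  field_simp
  ring
end

section
/- Let x > 0, R > 0, and β₀ be real with e^{β₀} < R. Set M = (e^{x/2} − 1)/(e^{x/2} + 1) and Y = (e^x − 1)/(R·e^{−β₀} + e^x + 1 + e^{x+β₀}/R). If Y ≥ M/2 and M − Y < M³/2, then 1 < R·e^{−β₀} < e^x. -/
theorem stmt_8 (x R β₀ : ℝ) (hx : 0 < x) (hR : 0 < R) (hβ : Real.exp β₀ < R)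
    (M Y : ℝ)
    (hM : M = (Real.exp (x / 2) - 1) / (Real.exp (x / 2) + 1))
    (hY : Y = (Real.exp x - 1) /
      (R * Real.exp (-β₀) + Real.exp x + 1 + Real.exp (x + β₀) / R))
    (h1 : M / 2 ≤ Y) (h2 : M - Y < M ^ 3 / 2) :
    1 < R * Real.exp (-β₀) ∧ R * Real.exp (-β₀) < Real.exp x := by
  set s := Real.exp (x / 2) with hs_def
  have hs : 1 < s := by
    rw [hs_def, show (1:ℝ) = Real.exp 0 by simp]
    exact Real.exp_lt_exp.mpr (by linarith)
  have hE : Real.exp x = s ^ 2 := by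
    rw [hs_def, pow_two, ← Real.exp_add]
    norm_num
  set t := R * Real.exp (-β₀) with ht_def
  have htpos : 0 < t := mul_pos hR (Real.exp_pos _)
  have ht : 1 < t := by
    have h := mul_lt_mul_of_pos_right hβ (Real.exp_pos (-β₀))
    rwa [← Real.exp_add, add_neg_cancel, Real.exp_zero] at h
  refine ⟨ht, ?_⟩
  by_contra hcon
  push_neg at hcon
  have hEt : s ^ 2 ≤ t := by rw [← hE]; exact hcon
  have hfrac : Real.exp (x + β₀) / R = s ^ 2 / t := by
    rw [Real.exp_add, hE, ht_def, Real.exp_neg]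
    field_simp
  have hY' : Y = (s ^ 2 - 1) / (t + s ^ 2 + 1 + s ^ 2 / t) := by
    rw [hY, hE, hfrac]
  have hnum : 0 ≤ s ^ 2 - 1 := by nlinarith
  have hden : 2 * (s ^ 2 + 1) ≤ t + s ^ 2 + 1 + s ^ 2 / t := by
    have key : (s ^ 2 + 1) * t ≤ t * t + s ^ 2 := by nlinarith [mul_nonneg (sub_nonneg.mpr hEt) (sub_nonneg.mpr ht.le)]
    have : s ^ 2 + 1 ≤ t + s ^ 2 / t := by
      rw [← sub_nonneg]
      have : t + s ^ 2 / t - (s ^ 2 + 1) = (t * t + s ^ 2 - (s ^ 2 + 1) * t) / t := by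
        field_simp
      rw [this]
      exact div_nonneg (by linarith) htpos.le
    linarith
  have hYle : Y ≤ (s ^ 2 - 1) / (2 * (s ^ 2 + 1)) := by
    rw [hY']
    exact div_le_div_of_nonneg_left hnum (by positivity) hden
  have hfin : M ^ 3 / 2 ≤ M - (s ^ 2 - 1) / (2 * (s ^ 2 + 1)) := by
    rw [hM]
    rw [div_le_iff₀ (by norm_num : (0:ℝ) < 2)] at *
    have hsp : (0:ℝ) < s + 1 := by linarith
    have hsq : (0:ℝ) < s ^ 2 + 1 := by positivity
    rw [div_pow, ← sub_nonneg]
    have expand : ((s - 1) / (s + 1) - (s ^ 2 - 1) / (2 * (s ^ 2 + 1))) * 2 - (s - 1) ^ 3 / (s + 1) ^ 3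
        = ((s - 1) * 2 * (2 * (s ^ 2 + 1)) * (s + 1) ^ 2 - (s ^ 2 - 1) * 2 * (s + 1) ^ 3 - (s - 1) ^ 3 * (2 * (s ^ 2 + 1))) / ((s + 1) ^ 3 * (2 * (s ^ 2 + 1))) := by
      field_simp
    rw [expand]
    apply div_nonneg _ (by positivity)
    nlinarith [sq_nonneg (s - 1), sq_nonneg (s + 1), hs]
  linarith
end

section
/- Let n, h, j be natural numbers with h < j ≤ n, let a : {1,…,n} → ℝ and y : {1,…,n} → ℝ, and let y_j ∈ ℝ. For σ ∈ {0,1}ⁿ define f(σ) = y_K where K = max{k : h < k ≤ n and σ_k = 1} if this set is nonempty, and f(σ) = y_j otherwise. Then Σ_{σ∈{0,1}ⁿ} (Πᵢ a_i^{1−σ_i}·(1−a_i)^{σ_i})·f(σ) = (Π_{h<i≤n} a_i)·y_j + Σ_{h<k≤n} ((1−a_k)·Π_{k<i≤n} a_i)·y_k. -/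
open Finset

lemma wsum (a : ℕ → ℝ) (s : Finset ℕ) :
    ∑ T ∈ s.powerset, ∏ i ∈ s, (if i ∈ T then 1 - a i else a i) = 1 := by
  have h := Finset.prod_add (fun i => 1 - a i) a s
  have h1 : ∀ i ∈ s, (1 - a i) + a i = 1 := fun i _ => by ring
  rw [Finset.prod_congr rfl h1, Finset.prod_const_one] at h
  have h2 : ∑ T ∈ s.powerset, ∏ i ∈ s, (if i ∈ T then 1 - a i else a i)
      = ∑ t ∈ s.powerset, (∏ i ∈ t, (1 - a i)) * ∏ i ∈ s \ t, a i := by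
    apply Finset.sum_congr rfl
    intro T hT
    rw [Finset.mem_powerset] at hT
    rw [Finset.prod_ite]
    congr 1
    · apply Finset.prod_congr _ (fun _ _ => rfl)
      rw [Finset.filter_mem_eq_inter, Finset.inter_eq_right.mpr hT]
    · apply Finset.prod_congr _ (fun _ _ => rfl)
      ext x; simp [Finset.mem_sdiff, and_comm]
  rw [h2, ← h]

lemma aux (h : ℕ) (a y : ℕ → ℝ) (yj : ℝ) :
    ∀ n, h ≤ n →
    ∑ T ∈ (Finset.Icc 1 n).powerset,
        (∏ i ∈ Finset.Icc 1 n, if i ∈ T then 1 - a i else a i) *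
          (if hT : (T.filter (fun k => h < k)).Nonempty
           then y ((T.filter (fun k => h < k)).max' hT) else yj)
      = (∏ i ∈ Finset.Ioc h n, a i) * yj
        + ∑ k ∈ Finset.Ioc h n, ((1 - a k) * ∏ i ∈ Finset.Ioc k n, a i) * y k := by
  intro n hn
  induction n, hn using Nat.le_induction with
  | base =>
    rw [Finset.Ioc_self]
    simp only [Finset.prod_empty, Finset.sum_empty, one_mul, add_zero]
    have key : ∀ T ∈ (Finset.Icc 1 h).powerset,
        (∏ i ∈ Finset.Icc 1 h, if i ∈ T then 1 - a i else a i) *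
          (if hT : (T.filter (fun k => h < k)).Nonempty
           then y ((T.filter (fun k => h < k)).max' hT) else yj)
        = (∏ i ∈ Finset.Icc 1 h, if i ∈ T then 1 - a i else a i) * yj := by
      intro T hT
      rw [Finset.mem_powerset] at hT
      have : T.filter (fun k => h < k) = ∅ := by
        rw [Finset.filter_eq_empty_iff]
        intro k hk
        have := (Finset.mem_Icc.mp (hT hk)).2
        omega
      rw [dif_neg (by simp [this])]
    rw [Finset.sum_congr rfl key, ← Finset.sum_mul, wsum, one_mul]
  | succ n hn ih =>
    have hnot : n + 1 ∉ Finset.Icc 1 n := by simp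
    have hIcc : Finset.Icc 1 (n + 1) = insert (n + 1) (Finset.Icc 1 n) := by
      ext x; simp only [Finset.mem_Icc, Finset.mem_insert]; omega
    have hIoc : Finset.Ioc h (n + 1) = insert (n + 1) (Finset.Ioc h n) := by
      ext x; simp only [Finset.mem_Ioc, Finset.mem_insert]; omega
    have hnotI : n + 1 ∉ Finset.Ioc h n := by simp
    rw [hIcc, Finset.sum_powerset_insert hnot]
    -- first sum: T without n+1
    have e1 : ∀ T ∈ (Finset.Icc 1 n).powerset,
        (∏ i ∈ insert (n + 1) (Finset.Icc 1 n), if i ∈ T then 1 - a i else a i) *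
          (if hT : (T.filter (fun k => h < k)).Nonempty
           then y ((T.filter (fun k => h < k)).max' hT) else yj)
        = a (n + 1) * ((∏ i ∈ Finset.Icc 1 n, if i ∈ T then 1 - a i else a i) *
          (if hT : (T.filter (fun k => h < k)).Nonempty
           then y ((T.filter (fun k => h < k)).max' hT) else yj)) := by
      intro T hT
      rw [Finset.mem_powerset] at hT
      have hTn : n + 1 ∉ T := fun hx => hnot (hT hx)
      rw [Finset.prod_insert hnot, if_neg hTn, mul_assoc]
    have e2 : ∀ T ∈ (Finset.Icc 1 n).powerset,
        (∏ i ∈ insert (n + 1) (Finset.Icc 1 n), if i ∈ insert (n + 1) T then 1 - a i else a i) *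
          (if hT : ((insert (n + 1) T).filter (fun k => h < k)).Nonempty
           then y (((insert (n + 1) T).filter (fun k => h < k)).max' hT) else yj)
        = (1 - a (n + 1)) * y (n + 1) *
            (∏ i ∈ Finset.Icc 1 n, if i ∈ T then 1 - a i else a i) := by
      intro T hT
      rw [Finset.mem_powerset] at hT
      have hfil : (insert (n + 1) T).filter (fun k => h < k)
          = insert (n + 1) (T.filter (fun k => h < k)) := by
        rw [Finset.filter_insert, if_pos (by omega)]
      have hne : ((insert (n + 1) T).filter (fun k => h < k)).Nonempty := by
        rw [hfil]; exact Finset.insert_nonempty _ _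
      have hmax : ((insert (n + 1) T).filter (fun k => h < k)).max' hne = n + 1 := by
        apply le_antisymm
        · apply Finset.max'_le
          intro x hx
          rw [hfil, Finset.mem_insert] at hx
          rcases hx with rfl | hx
          · exact le_rfl
          · have := (Finset.mem_Icc.mp (hT (Finset.mem_filter.mp hx).1)).2; omega
        · exact Finset.le_max' _ _ (by rw [hfil]; exact Finset.mem_insert_self _ _)
      rw [dif_pos hne, hmax, Finset.prod_insert hnot,
        if_pos (Finset.mem_insert_self _ _)]
      have : (∏ i ∈ Finset.Icc 1 n, if i ∈ insert (n + 1) T then 1 - a i else a i)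
          = ∏ i ∈ Finset.Icc 1 n, if i ∈ T then 1 - a i else a i := by
        apply Finset.prod_congr rfl
        intro i hi
        have : i ≠ n + 1 := by have := (Finset.mem_Icc.mp hi).2; omega
        simp [Finset.mem_insert, this]
      rw [this]; ring
    rw [Finset.sum_congr rfl e1, Finset.sum_congr rfl e2, ← Finset.mul_sum, ih,
      ← Finset.mul_sum, wsum, mul_one, hIoc, Finset.prod_insert hnotI,
      Finset.sum_insert hnotI]
    have e3 : ∀ k ∈ Finset.Ioc h n,
        ((1 - a k) * ∏ i ∈ Finset.Ioc k (n + 1), a i) * y k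
        = a (n + 1) * (((1 - a k) * ∏ i ∈ Finset.Ioc k n, a i) * y k) := by
      intro k hk
      have hk' := Finset.mem_Ioc.mp hk
      have : Finset.Ioc k (n + 1) = insert (n + 1) (Finset.Ioc k n) := by
        ext x; simp only [Finset.mem_Ioc, Finset.mem_insert]; omega
      rw [this, Finset.prod_insert (by simp)]; ring
    rw [Finset.sum_congr rfl e3, ← Finset.mul_sum, Finset.Ioc_self,
      Finset.prod_empty]
    ring

theorem stmt_15 (n h j : ℕ) (hhj : h < j) (hjn : j ≤ n)
    (a y : ℕ → ℝ) (yj : ℝ)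
    (f : Finset ℕ → ℝ)
    (hf : ∀ T : Finset ℕ, f T =
      if hT : (T.filter (fun k => h < k)).Nonempty
      then y ((T.filter (fun k => h < k)).max' hT) else yj) :
    ∑ T ∈ (Finset.Icc 1 n).powerset,
        (∏ i ∈ Finset.Icc 1 n, if i ∈ T then 1 - a i else a i) * f T
      = (∏ i ∈ Finset.Ioc h n, a i) * yj
        + ∑ k ∈ Finset.Ioc h n, ((1 - a k) * ∏ i ∈ Finset.Ioc k n, a i) * y k := by
  simp_rw [hf]
  exact aux h a y yj n (by omega)
end

section
/- Let n, h, j be natural numbers with h < n and h < j ≤ n. Let y : {1,…,n} → [0,1] and y_j ∈ [0,1] with y_n = 0, and for each i let [l_i, u_i] ⊆ [0,1] with l_i ≤ u_i. Define T(b) = (Π_{h<i≤n} b_i)·y_j + Σ_{h<k≤n} ((1−b_k)·Π_{k<i≤n} b_i)·y_k and T'(b) = (Π_{h<i<n} b_i)·y_j + Σ_{h<k<n} ((1−b_k)·Π_{k<i<n} b_i)·y_k. Then sup{T(b) : b_i ∈ [l_i,u_i] for all i} = u_n · sup{T'(b) : b_i ∈ [l_i,u_i] for h < i < n}. -/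
theorem stmt_18 (n h j : ℕ) (hhn : h < n) (hhj : h < j) (hjn : j ≤ n)
    (y : ℕ → ℝ) (yj : ℝ) (hy : ∀ i, y i ∈ Set.Icc (0 : ℝ) 1)
    (hyj : yj ∈ Set.Icc (0 : ℝ) 1) (hyn : y n = 0)
    (l u : ℕ → ℝ) (hlu : ∀ i, l i ≤ u i) (hl : ∀ i, 0 ≤ l i) (hu : ∀ i, u i ≤ 1)
    (T T' : (ℕ → ℝ) → ℝ)
    (hT : T = fun b => (∏ i ∈ Finset.Ioc h n, b i) * yj
        + ∑ k ∈ Finset.Ioc h n, ((1 - b k) * ∏ i ∈ Finset.Ioc k n, b i) * y k)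
    (hT' : T' = fun b => (∏ i ∈ Finset.Ioo h n, b i) * yj
        + ∑ k ∈ Finset.Ioo h n, ((1 - b k) * ∏ i ∈ Finset.Ioo k n, b i) * y k) :
    sSup (T '' {b | ∀ i, b i ∈ Set.Icc (l i) (u i)})
      = u n * sSup (T' '' {b | ∀ i ∈ Set.Ioo h n, b i ∈ Set.Icc (l i) (u i)}) := by
  have hun0 : 0 ≤ u n := (hl n).trans (hlu n)
  set S1 : Set (ℕ → ℝ) := {b | ∀ i, b i ∈ Set.Icc (l i) (u i)} with hS1
  set S2 : Set (ℕ → ℝ) := {b | ∀ i ∈ Set.Ioo h n, b i ∈ Set.Icc (l i) (u i)} with hS2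
  set M : ℝ := 1 + (Finset.Ioo h n).card with hM
  -- factorization T b = b n * T' b
  have hfact : ∀ b : ℕ → ℝ, T b = b n * T' b := by
    intro b
    rw [hT, hT']
    simp only
    have hnm : n ∉ Finset.Ioo h n := by simp
    rw [← Finset.Ioo_insert_right hhn, Finset.prod_insert hnm, Finset.sum_insert hnm,
        hyn, mul_zero]
    have hsum : ∑ k ∈ Finset.Ioo h n, ((1 - b k) * ∏ i ∈ Finset.Ioc k n, b i) * y k
        = b n * ∑ k ∈ Finset.Ioo h n, ((1 - b k) * ∏ i ∈ Finset.Ioo k n, b i) * y k := by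
      rw [Finset.mul_sum]
      refine Finset.sum_congr rfl fun k hk => ?_
      have hk' := Finset.mem_Ioo.mp hk
      have hnm2 : n ∉ Finset.Ioo k n := by simp
      rw [← Finset.Ioo_insert_right hk'.2, Finset.prod_insert hnm2]
      ring
    rw [hsum]; ring
  -- T' only depends on coordinates in Ioo h n
  have hdep : ∀ b b' : ℕ → ℝ, (∀ i ∈ Set.Ioo h n, b i = b' i) → T' b = T' b' := by
    intro b b' hbb
    rw [hT']
    simp only
    have hprod : ∀ k, h ≤ k → (∏ i ∈ Finset.Ioo k n, b i) = ∏ i ∈ Finset.Ioo k n, b' i := by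
      intro k hk
      refine Finset.prod_congr rfl fun i hi => ?_
      have hi' := Finset.mem_Ioo.mp hi
      exact hbb i ⟨lt_of_le_of_lt hk hi'.1, hi'.2⟩
    rw [hprod h le_rfl]
    congr 1
    refine Finset.sum_congr rfl fun k hk => ?_
    have hk' := Finset.mem_Ioo.mp hk
    rw [hprod k hk'.1.le, hbb k ⟨hk'.1, hk'.2⟩]
  -- bounds for T'
  have hbound : ∀ b : ℕ → ℝ, (∀ i ∈ Set.Ioo h n, b i ∈ Set.Icc (0:ℝ) 1) →
      T' b ∈ Set.Icc (0:ℝ) M := by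
    intro b hb
    rw [hT']
    simp only
    have hsub : ∀ k, h ≤ k → ∀ i ∈ Finset.Ioo k n, b i ∈ Set.Icc (0:ℝ) 1 := by
      intro k hk i hi
      have hi' := Finset.mem_Ioo.mp hi
      exact hb i ⟨lt_of_le_of_lt hk hi'.1, hi'.2⟩
    have hterm : ∀ k ∈ Finset.Ioo h n,
        ((1 - b k) * ∏ i ∈ Finset.Ioo k n, b i) * y k ∈ Set.Icc (0:ℝ) 1 := by
      intro k hk
      have hk' := Finset.mem_Ioo.mp hk
      have hbk := hb k ⟨hk'.1, hk'.2⟩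
      have hp0 : 0 ≤ ∏ i ∈ Finset.Ioo k n, b i :=
        Finset.prod_nonneg fun i hi => (hsub k hk'.1.le i hi).1
      have hp1 : (∏ i ∈ Finset.Ioo k n, b i) ≤ 1 :=
        Finset.prod_le_one (fun i hi => (hsub k hk'.1.le i hi).1)
          (fun i hi => (hsub k hk'.1.le i hi).2)
      constructor
      · exact mul_nonneg (mul_nonneg (by linarith [hbk.2]) hp0) ((hy k).1)
      · have ha : (1 - b k) * ∏ i ∈ Finset.Ioo k n, b i ≤ 1 := by
          have := mul_le_mul (show 1 - b k ≤ 1 by linarith [hbk.1]) hp1 hp0 zero_le_one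
          simpa using this
        calc ((1 - b k) * ∏ i ∈ Finset.Ioo k n, b i) * y k
            ≤ 1 * 1 := mul_le_mul ha (hy k).2 (hy k).1 zero_le_one
          _ = 1 := mul_one 1
    have hp0 : 0 ≤ ∏ i ∈ Finset.Ioo h n, b i :=
      Finset.prod_nonneg fun i hi => (hsub h le_rfl i hi).1
    have hp1 : (∏ i ∈ Finset.Ioo h n, b i) ≤ 1 :=
      Finset.prod_le_one (fun i hi => (hsub h le_rfl i hi).1)
        (fun i hi => (hsub h le_rfl i hi).2)
    constructor
    · exact add_nonneg (mul_nonneg hp0 hyj.1)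
        (Finset.sum_nonneg fun k hk => (hterm k hk).1)
    · have h1 : (∏ i ∈ Finset.Ioo h n, b i) * yj ≤ 1 :=
        (mul_le_one₀ hp1 hyj.1 hyj.2)
      have h2 : ∑ k ∈ Finset.Ioo h n, ((1 - b k) * ∏ i ∈ Finset.Ioo k n, b i) * y k
          ≤ (Finset.Ioo h n).card • (1:ℝ) :=
        Finset.sum_le_card_nsmul _ _ 1 fun k hk => (hterm k hk).2
      simp only [nsmul_eq_mul, mul_one] at h2
      rw [hM]; linarith
  have hSsub : S1 ⊆ S2 := fun b hb i _ => hb i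
  have hicc : ∀ b ∈ S2, ∀ i ∈ Set.Ioo h n, b i ∈ Set.Icc (0:ℝ) 1 :=
    fun b hb i hi => ⟨(hl i).trans (hb i hi).1, (hb i hi).2.trans (hu i)⟩
  have hlS1 : l ∈ S1 := fun i => ⟨le_rfl, hlu i⟩
  have hAne : (T '' S1).Nonempty := ⟨T l, l, hlS1, rfl⟩
  have hBne : (T' '' S2).Nonempty := ⟨T' l, l, hSsub hlS1, rfl⟩
  have hBbdd : BddAbove (T' '' S2) := by
    refine ⟨M, ?_⟩
    rintro x ⟨b, hb, rfl⟩
    exact (hbound b (hicc b hb)).2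
  have hAbdd : BddAbove (T '' S1) := by
    refine ⟨M, ?_⟩
    rintro x ⟨b, hb, rfl⟩
    have h0 := hbound b (hicc b (hSsub hb))
    have hbn : b n ∈ Set.Icc (0:ℝ) 1 := ⟨(hl n).trans (hb n).1, (hb n).2.trans (hu n)⟩
    calc T b = b n * T' b := hfact b
      _ ≤ 1 * M := mul_le_mul hbn.2 h0.2 h0.1 zero_le_one
      _ = M := one_mul M
  -- direction 1
  have hdir1 : sSup (T '' S1) ≤ u n * sSup (T' '' S2) := by
    apply csSup_le hAne
    rintro x ⟨b, hb, rfl⟩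
    have h0 := hbound b (hicc b (hSsub hb))
    have hle : T' b ≤ sSup (T' '' S2) := le_csSup hBbdd ⟨b, hSsub hb, rfl⟩
    calc T b = b n * T' b := hfact b
      _ ≤ u n * T' b := mul_le_mul_of_nonneg_right (hb n).2 h0.1
      _ ≤ u n * sSup (T' '' S2) := mul_le_mul_of_nonneg_left hle hun0
  -- direction 2
  have hdir2 : u n * sSup (T' '' S2) ≤ sSup (T '' S1) := by
    -- for each b' in S2, u n * T' b' ∈ T '' S1 up to equality
    have hkey : ∀ b' ∈ S2, u n * T' b' ≤ sSup (T '' S1) := by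
      intro b' hb'
      set b : ℕ → ℝ := fun i => if i ∈ Set.Ioo h n then b' i else if i = n then u n else l i
        with hbdef
      have hbS1 : b ∈ S1 := by
        intro i
        rw [hbdef]
        by_cases h1 : i ∈ Set.Ioo h n
        · simp only [h1, if_true]; exact hb' i h1
        · simp only [h1, if_false]
          by_cases h2 : i = n
          · simp only [h2, if_true]; exact ⟨h2 ▸ hlu i, le_rfl⟩
          · simp only [h2, if_false]; exact ⟨le_rfl, hlu i⟩
      have hbn : b n = u n := by
        rw [hbdef]
        simp [Set.mem_Ioo]
      have hTb : T' b = T' b' := by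
        apply hdep
        intro i hi
        rw [hbdef]
        simp only [hi, if_true]
      have : T b ≤ sSup (T '' S1) := le_csSup hAbdd ⟨b, hbS1, rfl⟩
      calc u n * T' b' = b n * T' b := by rw [hbn, hTb]
        _ = T b := (hfact b).symm
        _ ≤ sSup (T '' S1) := this
    rcases eq_or_lt_of_le hun0 with h0 | h0
    · have h1 : sSup (T '' S1) ≥ 0 := by
        have := hkey l (hSsub hlS1)
        rw [← h0] at this
        linarith
      rw [← h0]; linarith
    · have h1 : sSup (T' '' S2) ≤ sSup (T '' S1) / u n := by
        apply csSup_le hBne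
        rintro x ⟨b', hb', rfl⟩
        rw [le_div_iff₀ h0, mul_comm]
        exact hkey b' hb'
      calc u n * sSup (T' '' S2) ≤ u n * (sSup (T '' S1) / u n) :=
            mul_le_mul_of_nonneg_left h1 hun0
        _ = sSup (T '' S1) := by field_simp
  linarith
end

section
/- Let n, h, j be natural numbers with h < n and h < j ≤ n. Let y : {1,…,n} → [0,1] and y_j ∈ [0,1] with y_n = 1, and for each i let [l_i, u_i] ⊆ [0,1] with l_i ≤ u_i. Define T(b) = (Π_{h<i≤n} b_i)·y_j + Σ_{h<k≤n} ((1−b_k)·Π_{k<i≤n} b_i)·y_k and T'(b) = (Π_{h<i<n} b_i)·y_j + Σ_{h<k<n} ((1−b_k)·Π_{k<i<n} b_i)·y_k. Then sup{T(b) : b_i ∈ [l_i,u_i] for all i} = 1 − l_n · inf{1 − T'(b) : b_i ∈ [l_i,u_i] for h < i < n}. -/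
private lemma tele19 (b : ℕ → ℝ) : ∀ n h : ℕ, h < n →
    ∑ k ∈ Finset.Ioo h n, (1 - b k) * ∏ i ∈ Finset.Ioo k n, b i
      = 1 - ∏ i ∈ Finset.Ioo h n, b i := by
  intro n
  induction n with
  | zero => intro h hh; omega
  | succ n ih =>
    intro h hh
    have hIoo : Finset.Ioo n (n+1) = (∅ : Finset ℕ) :=
      Finset.ext fun x => by simp
    rcases eq_or_lt_of_le (Nat.lt_succ_iff.mp hh) with rfl | hn
    · simp [hIoo]
    · have key : ∀ a : ℕ, a < n → Finset.Ioo a (n+1) = insert n (Finset.Ioo a n) := by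
        intro a ha
        refine Finset.ext fun x => by simp; omega
      rw [key h hn, Finset.sum_insert (by simp), Finset.prod_insert (by simp), hIoo,
        Finset.sum_congr rfl (fun k hk => by
          rw [key k (Finset.mem_Ioo.mp hk).2, Finset.prod_insert (by simp)])]
      have : ∑ k ∈ Finset.Ioo h n, (1 - b k) * (b n * ∏ i ∈ Finset.Ioo k n, b i)
          = b n * ∑ k ∈ Finset.Ioo h n, (1 - b k) * ∏ i ∈ Finset.Ioo k n, b i := by
        rw [Finset.mul_sum]; exact Finset.sum_congr rfl fun k _ => by ring
      rw [this, ih h hn]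
      simp; ring

private lemma split19 (b y : ℕ → ℝ) (yj : ℝ) (h n : ℕ) (hhn : h < n) (hyn : y n = 1) :
    (∏ i ∈ Finset.Ioc h n, b i) * yj
        + ∑ k ∈ Finset.Ioc h n, ((1 - b k) * ∏ i ∈ Finset.Ioc k n, b i) * y k
      = 1 - b n * (1 - ((∏ i ∈ Finset.Ioo h n, b i) * yj
        + ∑ k ∈ Finset.Ioo h n, ((1 - b k) * ∏ i ∈ Finset.Ioo k n, b i) * y k)) := by
  have key : ∀ a : ℕ, a < n → Finset.Ioc a n = insert n (Finset.Ioo a n) := by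
    intro a ha
    refine Finset.ext fun x => by simp; omega
  rw [key h hhn, Finset.sum_insert (by simp), Finset.prod_insert (by simp),
    Finset.Ioc_self,
    Finset.sum_congr rfl (fun k hk => by
      rw [key k (Finset.mem_Ioo.mp hk).2, Finset.prod_insert (by simp)]),
    hyn]
  have : ∑ k ∈ Finset.Ioo h n, (1 - b k) * (b n * ∏ i ∈ Finset.Ioo k n, b i) * y k
      = b n * ∑ k ∈ Finset.Ioo h n, ((1 - b k) * ∏ i ∈ Finset.Ioo k n, b i) * y k := by
    rw [Finset.mul_sum]; exact Finset.sum_congr rfl fun k _ => by ring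
  rw [this]
  simp; ring

theorem stmt_19 (n h j : ℕ) (hhn : h < n) (hhj : h < j) (hjn : j ≤ n)
    (y : ℕ → ℝ) (yj : ℝ) (hy : ∀ i, y i ∈ Set.Icc (0 : ℝ) 1)
    (hyj : yj ∈ Set.Icc (0 : ℝ) 1) (hyn : y n = 1)
    (l u : ℕ → ℝ) (hlu : ∀ i, l i ≤ u i) (hl : ∀ i, 0 ≤ l i) (hu : ∀ i, u i ≤ 1)
    (T T' : (ℕ → ℝ) → ℝ)
    (hT : T = fun b => (∏ i ∈ Finset.Ioc h n, b i) * yj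
        + ∑ k ∈ Finset.Ioc h n, ((1 - b k) * ∏ i ∈ Finset.Ioc k n, b i) * y k)
    (hT' : T' = fun b => (∏ i ∈ Finset.Ioo h n, b i) * yj
        + ∑ k ∈ Finset.Ioo h n, ((1 - b k) * ∏ i ∈ Finset.Ioo k n, b i) * y k) :
    sSup (T '' {b | ∀ i, b i ∈ Set.Icc (l i) (u i)})
      = 1 - l n * sInf ((fun b => 1 - T' b) ''
          {b | ∀ i ∈ Set.Ioo h n, b i ∈ Set.Icc (l i) (u i)}) := by
  set S : Set (ℕ → ℝ) := {b | ∀ i, b i ∈ Set.Icc (l i) (u i)} with hS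
  set S' : Set (ℕ → ℝ) := {b | ∀ i ∈ Set.Ioo h n, b i ∈ Set.Icc (l i) (u i)} with hS'
  -- basic facts
  have hlS : l ∈ S := fun i => ⟨le_refl _, hlu i⟩
  have hlS' : l ∈ S' := fun i _ => ⟨le_refl _, hlu i⟩
  -- T b = 1 - b n * (1 - T' b)
  have hsplit : ∀ b : ℕ → ℝ, T b = 1 - b n * (1 - T' b) := by
    intro b; rw [hT, hT']; exact split19 b y yj h n hhn hyn
  -- 1 - T' b ≥ 0 on S'
  have hT'le : ∀ b ∈ S', 0 ≤ 1 - T' b := by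
    intro b hb
    have hb01 : ∀ i ∈ Finset.Ioo h n, 0 ≤ b i ∧ b i ≤ 1 := by
      intro i hi
      obtain ⟨h1, h2⟩ := hb i (by simpa using Finset.mem_Ioo.mp hi)
      exact ⟨le_trans (hl i) h1, le_trans h2 (hu i)⟩
    have hle : T' b ≤ 1 := by
      rw [hT']
      have := tele19 b n h hhn
      have h1 : (∏ i ∈ Finset.Ioo h n, b i) * yj ≤ ∏ i ∈ Finset.Ioo h n, b i :=
        mul_le_of_le_one_right
          (Finset.prod_nonneg fun i hi => (hb01 i hi).1) hyj.2
      have h2 : ∑ k ∈ Finset.Ioo h n, ((1 - b k) * ∏ i ∈ Finset.Ioo k n, b i) * y k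
          ≤ ∑ k ∈ Finset.Ioo h n, (1 - b k) * ∏ i ∈ Finset.Ioo k n, b i := by
        refine Finset.sum_le_sum fun k hk => ?_
        have hk' := Finset.mem_Ioo.mp hk
        refine mul_le_of_le_one_right (mul_nonneg (by linarith [(hb01 k hk).2])
          (Finset.prod_nonneg fun i hi => ?_)) (hy k).2
        have hi' := Finset.mem_Ioo.mp hi
        exact (hb01 i (Finset.mem_Ioo.mpr ⟨lt_trans hk'.1 hi'.1, hi'.2⟩)).1
      calc (∏ i ∈ Finset.Ioo h n, b i) * yj
            + ∑ k ∈ Finset.Ioo h n, ((1 - b k) * ∏ i ∈ Finset.Ioo k n, b i) * y k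
          ≤ (∏ i ∈ Finset.Ioo h n, b i)
            + ∑ k ∈ Finset.Ioo h n, (1 - b k) * ∏ i ∈ Finset.Ioo k n, b i :=
            add_le_add h1 h2
        _ = 1 := by rw [this]; ring
    linarith
  -- the infimum set
  set B : Set ℝ := (fun b => 1 - T' b) '' S' with hB
  have hBne : B.Nonempty := ⟨_, l, hlS', rfl⟩
  have hBlb : ∀ x ∈ B, (0:ℝ) ≤ x := by
    rintro x ⟨b, hb, rfl⟩; exact hT'le b hb
  have hBbdd : BddBelow B := ⟨0, fun x hx => hBlb x hx⟩
  set m : ℝ := sInf B with hm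
  have hm0 : 0 ≤ m := le_csInf hBne hBlb
  have hln0 : 0 ≤ l n := hl n
  have hln1 : l n ≤ 1 := le_trans (hlu n) (hu n)
  -- upper bound for T on S
  have hub : ∀ x ∈ T '' S, x ≤ 1 - l n * m := by
    rintro x ⟨b, hb, rfl⟩
    have hbS' : b ∈ S' := fun i _ => hb i
    have hmem : 1 - T' b ∈ B := ⟨b, hbS', rfl⟩
    have h1 : m ≤ 1 - T' b := csInf_le hBbdd hmem
    have h2 : l n ≤ b n := (hb n).1
    have h3 : l n * m ≤ b n * (1 - T' b) :=
      mul_le_mul h2 h1 hm0 (le_trans hln0 h2)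
    rw [hsplit b]; linarith
  have hAne : (T '' S).Nonempty := ⟨_, l, hlS, rfl⟩
  have hAbdd : BddAbove (T '' S) := ⟨1 - l n * m, hub⟩
  refine le_antisymm (csSup_le hAne hub) ?_
  refine le_of_forall_pos_le_add fun ε hε => ?_
  obtain ⟨x, hx, hxlt⟩ := Real.lt_sInf_add_pos hBne hε
  obtain ⟨b', hb', rfl⟩ := hx
  set c : ℕ → ℝ := fun i => if i ∈ Set.Ioo h n then b' i else l i with hc
  have hcS : c ∈ S := by
    intro i
    by_cases hi : i ∈ Set.Ioo h n
    · simpa [hc, Set.mem_Ioo.mp hi] using hb' i hi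
    · have : ¬ (h < i ∧ i < n) := by simpa [Set.mem_Ioo] using hi
      simp [hc, Set.mem_Ioo, this, hlu i]
  have hcn : c n = l n := by simp [hc]
  have hT'c : T' c = T' b' := by
    have hcong : ∀ i ∈ Finset.Ioo h n, c i = b' i := by
      intro i hi
      have := Finset.mem_Ioo.mp hi
      simp [hc, Set.mem_Ioo, this.1, this.2]
    have h1 : ∏ i ∈ Finset.Ioo h n, c i = ∏ i ∈ Finset.Ioo h n, b' i :=
      Finset.prod_congr rfl hcong
    have h2 : ∑ k ∈ Finset.Ioo h n, ((1 - c k) * ∏ i ∈ Finset.Ioo k n, c i) * y k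
        = ∑ k ∈ Finset.Ioo h n, ((1 - b' k) * ∏ i ∈ Finset.Ioo k n, b' i) * y k := by
      refine Finset.sum_congr rfl fun k hk => ?_
      have hk' := Finset.mem_Ioo.mp hk
      have h3 : ∏ i ∈ Finset.Ioo k n, c i = ∏ i ∈ Finset.Ioo k n, b' i := by
        refine Finset.prod_congr rfl fun i hi => ?_
        have hi' := Finset.mem_Ioo.mp hi
        exact hcong i (Finset.mem_Ioo.mpr ⟨lt_trans hk'.1 hi'.1, hi'.2⟩)
      rw [hcong k hk, h3]
    simp only [hT']
    rw [h1, h2]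
  have hTc : T c = 1 - l n * (1 - T' b') := by
    rw [hsplit c, hcn, hT'c]
  have hle : T c ≤ sSup (T '' S) := le_csSup hAbdd ⟨c, hcS, rfl⟩
  have : l n * (1 - T' b') ≤ l n * (m + ε) :=
    mul_le_mul_of_nonneg_left (le_of_lt hxlt) hln0
  nlinarith [mul_le_of_le_one_left (le_of_lt hε) hln1]
end
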